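/- Let T : ℝ → ℝ be defined by T(x) = x/(1-x) if x ≤ 1/2 and T(x) = (2x-1)/x if x > 1/2. If x ∈ (0,1) is irrational and is not a root of any quadratic polynomial with integer coefficients (i.e. x is either transcendental or algebraic of degree greater than 2), then the orbit of x under T is not eventually periodic: for all k ≥ 0 and all m ≥ 1, T^[k+m](x) ≠ T^[k](x). -/

import Mathlib

noncomputable def T : ℝ → ℝ := fun x => if x ≤ 1/2 then x / (1 - x) else (2*x - 1) / x

def Rep13 (x y : ℝ) (a b c d : ℤ) : Prop :=
  a * d - b * c = 1 ∧ (0:ℝ) < (c:ℝ) * x + d ∧ y = ((a:ℝ) * x + b) / ((c:ℝ) * x + d)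

lemma rep13_irrational {x y : ℝ} {a b c d : ℤ} (hirr : Irrational x)
    (h : Rep13 x y a b c d) : Irrational y := by
  obtain ⟨hdet, hD, hy⟩ := h
  rintro ⟨q, hq⟩
  have hD' : (c:ℝ) * x + d ≠ 0 := ne_of_gt hD
  have hq2 : (q:ℝ) * ((c:ℝ)*x + d) = (a:ℝ)*x + b :=
    (eq_div_iff hD').mp (hq.trans hy)
  by_cases hα : (q * (c:ℚ) - (a:ℚ)) = 0
  · have ha : (a:ℝ) = (q:ℝ) * c := by
      have := congrArg (Rat.cast : ℚ → ℝ) hα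
      push_cast at this; linarith
    have hb : (b:ℝ) = (q:ℝ) * d := by linear_combination -hq2 - x * ha
    have ha' : (a:ℚ) = q * c := by exact_mod_cast ha
    have hb' : (b:ℚ) = q * d := by exact_mod_cast hb
    have hdq : (a:ℚ) * d - (b:ℚ) * c = 1 := by exact_mod_cast hdet
    rw [ha', hb'] at hdq
    have h01 : (0:ℚ) = 1 := by linear_combination hdq
    norm_num at h01
  · refine hirr ⟨((b:ℚ) - q * d) / (q * c - a), ?_⟩
    have hα' : ((q:ℝ) * c - a) ≠ 0 := by
      intro h0
      apply hα
      have : ((q * (c:ℚ) - (a:ℚ) : ℚ) : ℝ) = 0 := by push_cast; linarith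
      exact_mod_cast this
    push_cast
    rw [div_eq_iff hα']
    linear_combination -hq2

lemma rep13_step {x y : ℝ} {a b c d : ℤ} (hirr : Irrational x)
    (h : Rep13 x y a b c d) (hy : y ∈ Set.Ioo (0:ℝ) 1) :
    ∃ a' b' c' d' : ℤ, Rep13 x (T y) a' b' c' d' ∧ T y ∈ Set.Ioo (0:ℝ) 1 ∧
      (c':ℝ) * x + (d':ℝ) < (c:ℝ) * x + d := by
  obtain ⟨hy0, hy1⟩ := hy
  have hyirr := rep13_irrational hirr h
  obtain ⟨hdet, hD, hyeq⟩ := h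
  have hD' : (c:ℝ)*x + d ≠ 0 := ne_of_gt hD
  have hN : (a:ℝ)*x + b = y * ((c:ℝ)*x + d) := by
    rw [hyeq]; rw [div_mul_cancel₀ _ hD']
  have hhalfne : y ≠ 1/2 := by
    intro hh
    exact hyirr ⟨1/2, by rw [hh]; norm_num⟩
  by_cases hle : y ≤ 1/2
  · have hhalf : y < 1/2 := lt_of_le_of_ne hle hhalfne
    have hTy : T y = y / (1 - y) := by simp only [T]; rw [if_pos hle]
    have h1y : (0:ℝ) < 1 - y := by linarith
    have hDnew : ((c - a : ℤ):ℝ) * x + ((d - b : ℤ):ℝ) = (1 - y) * ((c:ℝ)*x + d) := by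
      push_cast; linear_combination -hN
    refine ⟨a, b, c - a, d - b, ⟨by linear_combination hdet, ?_, ?_⟩, ⟨?_, ?_⟩, ?_⟩
    · rw [hDnew]; exact mul_pos h1y hD
    · rw [hTy, hDnew, hN]
      rw [mul_div_mul_right _ _ hD']
    · rw [hTy]; exact div_pos hy0 h1y
    · rw [hTy]
      rw [div_lt_one h1y]; linarith
    · rw [hDnew]
      nlinarith [mul_pos hy0 hD]
  · have hhalf : 1/2 < y := lt_of_not_ge hle
    have hTy : T y = (2*y - 1) / y := by simp only [T]; rw [if_neg hle]
    have hy0' : y ≠ 0 := ne_of_gt hy0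
    have hNnew : ((2*a - c : ℤ):ℝ) * x + ((2*b - d : ℤ):ℝ) = (2*y - 1) * ((c:ℝ)*x + d) := by
      push_cast; linear_combination 2 * hN
    refine ⟨2*a - c, 2*b - d, a, b, ⟨by linear_combination hdet, ?_, ?_⟩, ⟨?_, ?_⟩, ?_⟩
    · rw [hN]; exact mul_pos hy0 hD
    · rw [hTy, hNnew, hN]
      rw [mul_div_mul_right _ _ hD']
    · rw [hTy]; exact div_pos (by linarith) hy0
    · rw [hTy]
      rw [div_lt_one hy0]; linarith
    · rw [hN]
      nlinarith [mul_pos (show (0:ℝ) < 1 - y by linarith) hD]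

lemma rep13_iter {x : ℝ} (hirr : Irrational x) :
    ∀ (m : ℕ) (y : ℝ) (a b c d : ℤ), Rep13 x y a b c d → y ∈ Set.Ioo (0:ℝ) 1 →
      ∃ p q r s : ℤ, Rep13 x (T^[m] y) p q r s ∧ T^[m] y ∈ Set.Ioo (0:ℝ) 1 ∧
        ((r:ℝ) * x + s ≤ (c:ℝ) * x + d) ∧ (1 ≤ m → (r:ℝ) * x + s < (c:ℝ) * x + d) := by
  intro m
  induction m with
  | zero =>
    intro y a b c d h hy
    exact ⟨a, b, c, d, by simpa using h, by simpa using hy, le_refl _, by omega⟩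
  | succ n ih =>
    intro y a b c d h hy
    obtain ⟨p, q, r, s, hrep, hmem, hle, hlt⟩ := ih y a b c d h hy
    obtain ⟨p', q', r', s', hrep', hmem', hlt'⟩ := rep13_step hirr hrep hmem
    rw [← Function.iterate_succ_apply' T n y] at hrep' hmem'
    exact ⟨p', q', r', s', hrep', hmem', by linarith, fun _ => by linarith⟩

theorem stmt13 (x : ℝ) (hx : x ∈ Set.Ioo (0:ℝ) 1) (hirr : Irrational x)
    (hnq : ¬ ∃ a b c : ℤ, a ≠ 0 ∧ (a : ℝ) * x^2 + (b : ℝ) * x + (c : ℝ) = 0) :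
    ∀ k m : ℕ, 1 ≤ m → T^[k + m] x ≠ T^[k] x := by
  intro k m hm heq
  have hrep0 : Rep13 x x 1 0 0 1 := ⟨by norm_num, by norm_num, by norm_num⟩
  obtain ⟨a, b, c, d, hrk, hmemk, -, -⟩ := rep13_iter hirr k x 1 0 0 1 hrep0 hx
  obtain ⟨p, q, r, s, hrkm, hmemkm, -, hlt⟩ := rep13_iter hirr m (T^[k] x) a b c d hrk hmemk
  have hlt := hlt hm
  have hiter : T^[k+m] x = T^[m] (T^[k] x) := by
    rw [add_comm]; exact Function.iterate_add_apply T m k x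
  rw [hiter] at heq
  obtain ⟨hdet1, hD1, hv1⟩ := hrk
  obtain ⟨hdet2, hD2, hv2⟩ := hrkm
  rw [hv2] at heq
  rw [hv1] at heq
  have hcross : ((p:ℝ)*x + q) * ((c:ℝ)*x + d) = ((a:ℝ)*x + b) * ((r:ℝ)*x + s) :=
    (div_eq_div_iff (ne_of_gt hD2) (ne_of_gt hD1)).mp heq
  have key : ((p*c - a*r : ℤ):ℝ) * x^2 + ((p*d + q*c - a*s - b*r : ℤ):ℝ) * x
      + ((q*d - b*s : ℤ):ℝ) = 0 := by
    push_cast; linear_combination hcross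
  by_cases hA : p*c - a*r = 0
  · by_cases hB : p*d + q*c - a*s - b*r = 0
    · have hC : q*d - b*s = 0 := by
        have h0 : ((q*d - b*s : ℤ):ℝ) = 0 := by
          rw [hA, hB] at key; push_cast at key ⊢; linarith
        exact_mod_cast h0
      -- proportionality
      have hr : r = c * (d*p - b*r) := by
        linear_combination (-r) * hdet1 + (-d) * hA
      have hs : s = d * (d*p - b*r) := by
        linear_combination (-s) * hdet1 + c * hC + (-d) * hB
      have ht2 : (d*p - b*r) * (d*p - b*r) = 1 := by
        linear_combination (d*p - b*r) * hB + (a*r - p*c) * hC + (p*s - q*r) * hdet1 + hdet2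
      have ht : d*p - b*r = 1 ∨ d*p - b*r = -1 :=
        Int.isUnit_iff.mp (IsUnit.of_mul_eq_one _ ht2)
      rcases ht with h1 | h1
      · rw [h1, mul_one] at hr hs
        rw [hr, hs] at hlt
        exact absurd hlt (lt_irrefl _)
      · rw [h1] at hr hs
        have hr' : (r:ℝ) = -c := by exact_mod_cast congrArg (Int.cast : ℤ → ℝ) (by omega : r = -c)
        have hs' : (s:ℝ) = -d := by exact_mod_cast congrArg (Int.cast : ℤ → ℝ) (by omega : s = -d)
        rw [hr', hs'] at hD2
        linarith
    · -- linear case : x rational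
      apply hirr
      refine ⟨(-(q*d - b*s : ℤ) : ℚ) / ((p*d + q*c - a*s - b*r : ℤ) : ℚ), ?_⟩
      have hB' : ((p*d + q*c - a*s - b*r : ℤ):ℝ) ≠ 0 := by exact_mod_cast hB
      have keyB : ((p*d + q*c - a*s - b*r : ℤ):ℝ) * x + ((q*d - b*s : ℤ):ℝ) = 0 := by
        rw [hA] at key; push_cast at key ⊢; linarith
      push_cast at hB' keyB ⊢
      rw [div_eq_iff hB']
      linarith
  · exact hnq ⟨p*c - a*r, p*d + q*c - a*s - b*r, q*d - b*s, hA, key⟩
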